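/- Every nonempty open subset of a (nondegenerate Hausdorff) continuum has cardinality at least the continuum (𝔠 = |ℝ|). -/
import Mathlib


/-- Every nonempty open subset of a nondegenerate Hausdorff continuum has cardinality at
least the continuum. -/
theorem stmt_11 {X : Type*} [TopologicalSpace X] [CompactSpace X] [T2Space X]
    [ConnectedSpace X] [Nontrivial X]
    (U : Set X) (hU : IsOpen U) (hne : U.Nonempty) :
    Cardinal.continuum ≤ Cardinal.mk U := by
  obtain ⟨x, hx⟩ := hne
  obtain ⟨T, hTc, hTne, hxT, hTU⟩ :
      ∃ T : Set X, IsClosed T ∧ T.Nonempty ∧ x ∉ T ∧ Tᶜ ⊆ U := by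
    by_cases h : U = Set.univ
    · obtain ⟨y, hy⟩ := exists_ne x
      exact ⟨{y}, isClosed_singleton, ⟨y, rfl⟩, by simp [hy.symm], by simp [h]⟩
    · refine ⟨Uᶜ, hU.isClosed_compl, ?_, by simpa using hx, by simp⟩
      rw [Set.nonempty_compl]; exact h
  obtain ⟨f, hf0, hf1, _⟩ := exists_continuous_zero_one_of_isClosed
    (isClosed_singleton (x := x)) hTc (by
      rw [Set.disjoint_left]; rintro a rfl; exact hxT)
  have hconn : IsPreconnected (Set.range f) := by
    rw [← Set.image_univ]
    exact isPreconnected_univ.image f f.continuous.continuousOn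
  obtain ⟨t0, ht0⟩ := hTne
  have h0 : (0 : ℝ) ∈ Set.range f := ⟨x, hf0 rfl⟩
  have h1 : (1 : ℝ) ∈ Set.range f := ⟨t0, hf1 ht0⟩
  have hIcc : Set.Icc (0 : ℝ) 1 ⊆ Set.range f := hconn.Icc_subset h0 h1
  -- injection from Ioo 0 1 into U
  have key : ∀ t : Set.Ioo (0 : ℝ) 1, ∃ z : U, f z = t := by
    rintro ⟨t, ht⟩
    obtain ⟨z, hz⟩ := hIcc (Set.mem_Icc_of_Ioo ht)
    refine ⟨⟨z, hTU fun hzT => ?_⟩, hz⟩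
    rw [hf1 hzT] at hz
    exact (ne_of_lt ht.2) hz.symm
  choose g hg using key
  have hginj : Function.Injective g := by
    intro a b hab
    apply Subtype.ext
    rw [← hg a, ← hg b, hab]
  have h := Cardinal.lift_mk_le'.mpr ⟨⟨g, hginj⟩⟩
  simpa [Cardinal.mk_Ioo_real one_pos, Cardinal.lift_continuum] using h
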